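/- Let d > 1, k coprime to d, and a_1,…,a_N integers with 0 < a_i < d; set μ_i(k) = frac(k·a_i/d). If κ_{ij} := (1 - μ_i(1) - μ_j(1))^{-1} is a (nonzero) integer, then κ_{ij} · (1 - μ_i(k) - μ_j(k)) is an integer. Moreover, if a_i = a_j, κ_{ij} ∈ (1/2)ℤ and k is odd, then again κ_{ij}·(1-μ_i(k)-μ_j(k)) ∈ ℤ. -/

import Mathlib

/-- **Lemma (branch orders, part b).**
Let `d > 1`, `k` coprime to `d`, `0 < a, b < d`, and `μ_i(k) = frac(k·a_i/d)`
(so `μ_i(1) = a_i/d`); assume `μ_a(1) + μ_b(1) ≠ 1` so that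
`κ_{ab} = (1 - a/d - b/d)⁻¹` is defined. If `κ_{ab} ∈ ℤ`, or if `a = b`,
`κ_{ab} ∈ ½ℤ` and `k` is odd, then `κ_{ab}·(1 - μ_a(k) - μ_b(k)) ∈ ℤ`. -/
theorem kappa_mul_one_sub_mu_isInt (d k : ℕ) (hd : 1 < d) (hk : Nat.Coprime k d)
    (a b : ℕ) (ha : 0 < a) (ha' : a < d) (hb : 0 < b) (hb' : b < d)
    (hne : (a : ℚ) / d + (b : ℚ) / d ≠ 1)
    (h : (∃ m : ℤ, ((1 : ℚ) - (a : ℚ) / d - (b : ℚ) / d)⁻¹ = m) ∨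
      (a = b ∧ (∃ m : ℤ, 2 * ((1 : ℚ) - (a : ℚ) / d - (b : ℚ) / d)⁻¹ = m) ∧ Odd k)) :
    ∃ m : ℤ, ((1 : ℚ) - (a : ℚ) / d - (b : ℚ) / d)⁻¹ *
        (1 - Int.fract (((k : ℚ) * a) / d) - Int.fract (((k : ℚ) * b) / d)) = m := by
  have hd0 : (d : ℚ) ≠ 0 := by positivity
  set D : ℤ := (d : ℤ) with hD
  set A : ℤ := (a : ℤ) with hA
  set B : ℤ := (b : ℤ) with hB
  set s : ℤ := D - A - B with hsdef
  have hsQ2 : (s : ℚ) = (d : ℚ) - a - b := by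
    rw [hsdef, hD, hA, hB]; push_cast; ring
  have hs0 : s ≠ 0 := by
    intro h0
    apply hne
    rw [hsdef, hD, hA, hB] at h0
    have hab : a + b = d := by omega
    have : ((a : ℚ) + b) = d := by exact_mod_cast hab
    field_simp
    linarith
  have hsQ : (s : ℚ) ≠ 0 := Int.cast_ne_zero.mpr hs0
  -- rewrite fractional parts
  have hfa : Int.fract (((k : ℚ) * a) / d) = ((((k : ℤ) * a) % D : ℤ) : ℚ) / d := by
    rw [show ((k : ℚ) * a) = (((k : ℤ) * a : ℤ) : ℚ) by push_cast; ring]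
    exact Int.fract_div_intCast_eq_div_intCast_mod
  have hfb : Int.fract (((k : ℚ) * b) / d) = ((((k : ℤ) * b) % D : ℤ) : ℚ) / d := by
    rw [show ((k : ℚ) * b) = (((k : ℤ) * b : ℤ) : ℚ) by push_cast; ring]
    exact Int.fract_div_intCast_eq_div_intCast_mod
  set rA : ℤ := ((k : ℤ) * A) % D with hrA
  set rB : ℤ := ((k : ℤ) * B) % D with hrB
  have hDA : D ∣ (k : ℤ) * A - rA := Int.dvd_self_sub_of_emod_eq rfl
  have hDB : D ∣ (k : ℤ) * B - rB := Int.dvd_self_sub_of_emod_eq rfl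
  -- key divisibility
  have hdvd : s ∣ D - rA - rB := by
    rcases h with ⟨m, hm⟩ | ⟨hab, ⟨m, hm⟩, hodd⟩
    · -- case 1 : κ ∈ ℤ, so s ∣ D
      have hDm : D = m * s := by
        have h1 : ((1 : ℚ) - (a : ℚ) / d - (b : ℚ) / d) = (s : ℚ) / d := by
          rw [hsQ2]; field_simp
        rw [h1] at hm
        have : (D : ℚ) = (m : ℚ) * s := by
          rw [inv_div] at hm
          field_simp at hm
          rw [hD]
          push_cast
          linarith [hm]
        exact_mod_cast this
      have hsD : s ∣ D := ⟨m, by linarith [hDm, mul_comm m s]⟩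
      have h1 : s ∣ (k : ℤ) * A - rA := dvd_trans hsD hDA
      have h2 : s ∣ (k : ℤ) * B - rB := dvd_trans hsD hDB
      have h3 : s ∣ D - (k : ℤ) * A - (k : ℤ) * B := by
        have : D - (k : ℤ) * A - (k : ℤ) * B = (1 - k) * D + k * s := by
          rw [hsdef]; ring
        rw [this]
        exact dvd_add (Dvd.dvd.mul_left hsD _) (dvd_mul_left s k)
      have := dvd_add (dvd_add h3 h1) h2
      convert this using 1
      · rfl
      ring
    · -- case 2 : a = b, 2κ ∈ ℤ, k odd
      subst hab
      have hBA : B = A := rfl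
      have hrBA : rB = rA := rfl
      have hDm : 2 * D = m * s := by
        have h1 : ((1 : ℚ) - (a : ℚ) / d - (a : ℚ) / d) = (s : ℚ) / d := by
          rw [hsQ2]; field_simp
        rw [h1] at hm
        have : (2 * D : ℚ) = (m : ℚ) * s := by
          rw [inv_div] at hm
          field_simp at hm
          rw [hD]
          push_cast
          linarith [hm]
        exact_mod_cast this
      have hs2D : s ∣ 2 * D := ⟨m, by linarith [mul_comm m s]⟩
      obtain ⟨t, ht⟩ := hodd
      have h2D : 2 * D ∣ 2 * ((k : ℤ) * A - rA) := mul_dvd_mul_left 2 hDA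
      have hkey : s ∣ (D - rA - rA) - (k : ℤ) * s := by
        have heq : (D - rA - rA) - (k : ℤ) * s =
            -(t : ℤ) * (2 * D) + 2 * ((k : ℤ) * A - rA) := by
          have hk2 : (k : ℤ) = 2 * t + 1 := by exact_mod_cast ht
          rw [hsdef, hk2, hBA]; ring
        rw [heq]
        exact dvd_add (hs2D.mul_left _) (dvd_trans hs2D h2D)
      have := dvd_add hkey (Dvd.intro_left k rfl : s ∣ (k : ℤ) * s)
      rw [hrBA]
      convert this using 1
      · rfl
      ring
  obtain ⟨c, hc⟩ := hdvd
  refine ⟨c, ?_⟩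
  have h1 : ((1 : ℚ) - (a : ℚ) / d - (b : ℚ) / d) = (s : ℚ) / d := by
    rw [hsQ2]; field_simp
  rw [hfa, hfb, h1, inv_div]
  have hcQ : ((D : ℚ) - rA - rB) = (s : ℚ) * c := by exact_mod_cast hc
  have hDq : ((D : ℤ) : ℚ) = (d : ℚ) := by rw [hD]; push_cast; rfl
  have hnum : (1 : ℚ) - (rA : ℚ) / d - (rB : ℚ) / d = ((s : ℚ) * c) / d := by
    field_simp
    linarith [hcQ, hDq]
  rw [hnum]
  field_simp
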